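/- Let (E,(M^j)_{j∈J}) and (Ẽ,(M̃^j)_{j∈J}) be two generic MPS data of the same dimension D, with correlation functions C and C̃. Assume that for every eigenvalue μ of E there exist a, b ∈ J with Tr(M^b P_μ M^a P_1) ≠ 0. If C^(2)_{(a,b)}(n) = C̃^(2)_{(a,b)}(n) for all a,b ∈ J and n ∈ ℕ, and C^(3)_{(a,b,e)}(n_1,n_2) = C̃^(3)_{(a,b,e)}(n_1,n_2) for all a,b,e ∈ J and (n_1,n_2) ∈ ℕ², then C^(N)_𝐣(n) = C̃^(N)_𝐣(n) for all N ≥ 2, all strings 𝐣 ∈ J^N and all n ∈ ℕ^{N−1}. (Wick's theorem for matrix product states: generically, all N-point functions of a translation invariant MPS are completely determined by its two- and three-point functions.) -/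

import Mathlib

open Matrix

/-- A generic MPS datum of dimension `D` with operator set `J`: a transfer matrix `E` that is
diagonalizable with `D` pairwise distinct eigenvalues (given by a biorthogonal system of right
eigenvectors `v k` and left eigenvectors `w k`), such that `1` is an eigenvalue (placed at
index `0`) and all other eigenvalues have modulus strictly less than `1`, together with a
family of matrices `(M^j)_{j ∈ J}`. -/
structure GenericMPS (D : ℕ) (J : Type*) [NeZero D] where
  E : Matrix (Fin D) (Fin D) ℂ
  M : J → Matrix (Fin D) (Fin D) ℂ
  μ : Fin D → ℂ
  v : Fin D → Fin D → ℂ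
  w : Fin D → Fin D → ℂ
  spec : E = ∑ k : Fin D, μ k • Matrix.vecMulVec (v k) (star (w k))
  ortho : ∀ k l : Fin D, star (w k) ⬝ᵥ v l = if k = l then (1 : ℂ) else 0
  distinct : Function.Injective μ
  top : μ 0 = 1
  contract : ∀ k : Fin D, k ≠ 0 → ‖μ k‖ < 1

namespace GenericMPS

variable {D : ℕ} [NeZero D] {J : Type*}

/-- The rank-one spectral projector `P_{μ_k} = v_k w_k^†` of `E` at the eigenvalue `μ k`;
`P 0` is the projector `P_1` at the top eigenvalue `1`. -/
noncomputable def P (Ψ : GenericMPS D J) (k : Fin D) : Matrix (Fin D) (Fin D) ℂ :=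
  Matrix.vecMulVec (Ψ.v k) (star (Ψ.w k))

/-- The word `M^{j_{r+1}} E^{n_r} M^{j_r} ⋯ M^{j_2} E^{n_1} M^{j_1}` (0-indexed data). -/
noncomputable def word (Ψ : GenericMPS D J) (j : ℕ → J) (n : ℕ → ℕ) :
    ℕ → Matrix (Fin D) (Fin D) ℂ
  | 0 => Ψ.M (j 0)
  | r + 1 => Ψ.M (j (r + 1)) * Ψ.E ^ n r * Ψ.word j n r

/-- The `N`-point correlation function
`C^(N)_𝐣(𝐧) = Tr(M^{j_N} E^{n_{N−1}} M^{j_{N−1}} ⋯ M^{j_2} E^{n_1} M^{j_1} P_1)`. -/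
noncomputable def corr (Ψ : GenericMPS D J) (N : ℕ) (j : ℕ → J) (n : ℕ → ℕ) : ℂ :=
  (Ψ.word j n (N - 1) * Ψ.P 0).trace

/-- The word `M^{j_{r+1}} P_{μ_{k_r}} M^{j_r} ⋯ M^{j_2} P_{μ_{k_1}} M^{j_1}` in which spectral
projectors are inserted between consecutive operators. -/
noncomputable def pword (Ψ : GenericMPS D J) (j : ℕ → J) (kt : ℕ → Fin D) :
    ℕ → Matrix (Fin D) (Fin D) ℂ
  | 0 => Ψ.M (j 0)
  | r + 1 => Ψ.M (j (r + 1)) * Ψ.P (kt r) * Ψ.pword j kt r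

end GenericMPS



open Finset

namespace GenericMPS

variable {D : ℕ} [NeZero D] {J : Type*}

/-- Matrix element `w_k† M^a v_l`. -/
noncomputable def fc (Ψ : GenericMPS D J) (a : J) (k l : Fin D) : ℂ :=
  star (Ψ.w k) ⬝ᵥ (Ψ.M a) *ᵥ (Ψ.v l)

/-- Scalar recursion computing `w_k† (word j n r) v_0`. -/
noncomputable def ts (Ψ : GenericMPS D J) (j : ℕ → J) (n : ℕ → ℕ) : ℕ → Fin D → ℂ
  | 0 => fun k => Ψ.fc (j 0) k 0
  | r + 1 => fun k => ∑ l, Ψ.μ l ^ n r * Ψ.fc (j (r + 1)) k l * Ψ.ts j n r l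

variable (Ψ : GenericMPS D J)

lemma P_mul_P (k l : Fin D) : Ψ.P k * Ψ.P l = if k = l then Ψ.P k else 0 := by
  ext i j
  have h1 : (Ψ.P k * Ψ.P l) i j = (star (Ψ.w k) ⬝ᵥ Ψ.v l) * (Ψ.v k i * star (Ψ.w l) j) := by
    simp only [P, Matrix.mul_apply, Matrix.vecMulVec_apply, dotProduct, Finset.sum_mul]
    exact Finset.sum_congr rfl fun m _ => by ring
  rw [h1, Ψ.ortho k l]
  by_cases hkl : k = l <;> simp [hkl, P, Matrix.vecMulVec_apply]

lemma P_mulVec (k : Fin D) (x : Fin D → ℂ) :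
    Ψ.P k *ᵥ x = (star (Ψ.w k) ⬝ᵥ x) • Ψ.v k := by
  funext i
  simp only [P, Matrix.mulVec, Matrix.vecMulVec_apply, dotProduct, Pi.smul_apply,
    smul_eq_mul, Finset.sum_mul]
  exact Finset.sum_congr rfl fun m _ => by ring

lemma sum_P : ∑ k, Ψ.P k = 1 := by
  classical
  set W : Matrix (Fin D) (Fin D) ℂ := Matrix.of fun k i => star (Ψ.w k) i with hW
  set V : Matrix (Fin D) (Fin D) ℂ := Matrix.of fun i k => Ψ.v k i with hV
  have hWV : W * V = 1 := by
    ext k l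
    simpa [hW, hV, Matrix.mul_apply, Matrix.one_apply, dotProduct] using Ψ.ortho k l
  have hVW : V * W = 1 := mul_eq_one_comm.mp hWV
  calc ∑ k, Ψ.P k = V * W := by
        ext i j
        simp [P, hV, hW, Matrix.mul_apply, Matrix.vecMulVec_apply, Matrix.sum_apply]
    _ = 1 := hVW

lemma spec' : Ψ.E = ∑ k, Ψ.μ k • Ψ.P k := Ψ.spec

lemma pow_spec (n : ℕ) : Ψ.E ^ n = ∑ k, Ψ.μ k ^ n • Ψ.P k := by
  induction n with
  | zero => simpa using (Ψ.sum_P).symm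
  | succ n ih =>
    rw [pow_succ, ih, Ψ.spec', Finset.sum_mul_sum]
    refine Finset.sum_congr rfl fun k _ => ?_
    have h1 : ∀ l, (Ψ.μ k ^ n • Ψ.P k) * (Ψ.μ l • Ψ.P l)
        = (Ψ.μ k ^ n * Ψ.μ l) • (Ψ.P k * Ψ.P l) := by
      intro l
      rw [Algebra.smul_mul_assoc, Matrix.mul_smul, smul_smul]
    simp only [h1, P_mul_P, smul_ite, smul_zero]
    rw [Finset.sum_ite_eq, if_pos (Finset.mem_univ k), pow_succ]

lemma trace_mul_P (X : Matrix (Fin D) (Fin D) ℂ) (k : Fin D) :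
    (X * Ψ.P k).trace = star (Ψ.w k) ⬝ᵥ X *ᵥ Ψ.v k := by
  simp only [Matrix.trace, Matrix.diag, Matrix.mul_apply, P, Matrix.vecMulVec_apply,
    dotProduct, Matrix.mulVec]
  refine Finset.sum_congr rfl fun i _ => ?_
  rw [Finset.mul_sum]
  exact Finset.sum_congr rfl fun m _ => by ring

lemma sum_mulVec' {ι : Type*} (s : Finset ι) (A : ι → Matrix (Fin D) (Fin D) ℂ)
    (x : Fin D → ℂ) : (∑ i ∈ s, A i) *ᵥ x = ∑ i ∈ s, A i *ᵥ x := by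
  funext j
  simp only [Matrix.mulVec, dotProduct, Matrix.sum_apply, Finset.sum_apply, Finset.sum_mul]
  rw [Finset.sum_comm]

lemma mulVec_sum' {ι : Type*} (s : Finset ι) (A : Matrix (Fin D) (Fin D) ℂ)
    (y : ι → Fin D → ℂ) : A *ᵥ (∑ i ∈ s, y i) = ∑ i ∈ s, A *ᵥ y i := by
  funext j
  simp only [Matrix.mulVec, dotProduct, Finset.sum_apply, Finset.mul_sum]
  rw [Finset.sum_comm]

lemma dotProduct_sum' {ι : Type*} (s : Finset ι) (x : Fin D → ℂ)
    (y : ι → Fin D → ℂ) : x ⬝ᵥ (∑ i ∈ s, y i) = ∑ i ∈ s, x ⬝ᵥ y i := by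
  simp only [dotProduct, Finset.sum_apply, Finset.mul_sum]
  rw [Finset.sum_comm]

lemma pow_mulVec (p : ℕ) (x : Fin D → ℂ) :
    (Ψ.E ^ p) *ᵥ x = ∑ l, (Ψ.μ l ^ p * (star (Ψ.w l) ⬝ᵥ x)) • Ψ.v l := by
  rw [Ψ.pow_spec p, sum_mulVec']
  refine Finset.sum_congr rfl fun l _ => ?_
  rw [Matrix.smul_mulVec, P_mulVec, smul_smul]

lemma word_dot (j : ℕ → J) (n : ℕ → ℕ) :
    ∀ r, ∀ k, star (Ψ.w k) ⬝ᵥ (Ψ.word j n r) *ᵥ Ψ.v 0 = Ψ.ts j n r k := by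
  intro r
  induction r with
  | zero => intro k; rfl
  | succ r ih =>
    intro k
    show star (Ψ.w k) ⬝ᵥ (Ψ.M (j (r+1)) * Ψ.E ^ n r * Ψ.word j n r) *ᵥ Ψ.v 0 = _
    rw [← Matrix.mulVec_mulVec, ← Matrix.mulVec_mulVec, Ψ.pow_mulVec]
    have h1 : Ψ.M (j (r+1)) *ᵥ (∑ l, (Ψ.μ l ^ n r * (star (Ψ.w l) ⬝ᵥ (Ψ.word j n r) *ᵥ Ψ.v 0)) • Ψ.v l)
        = ∑ l, (Ψ.μ l ^ n r * Ψ.ts j n r l) • (Ψ.M (j (r+1)) *ᵥ Ψ.v l) := by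
      rw [mulVec_sum']
      refine Finset.sum_congr rfl fun l _ => ?_
      rw [Matrix.mulVec_smul, ih l]
    rw [h1, dotProduct_sum']
    show _ = ∑ l, Ψ.μ l ^ n r * Ψ.fc (j (r+1)) k l * Ψ.ts j n r l
    refine Finset.sum_congr rfl fun l _ => ?_
    rw [dotProduct_smul]
    show (Ψ.μ l ^ n r * Ψ.ts j n r l) * Ψ.fc (j (r+1)) k l = _
    ring

lemma corr_eq_ts (N : ℕ) (j : ℕ → J) (n : ℕ → ℕ) :
    Ψ.corr N j n = Ψ.ts j n (N - 1) 0 := by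
  rw [corr, trace_mul_P, word_dot]

lemma ts_zero (j : ℕ → J) (n : ℕ → ℕ) (k : Fin D) : Ψ.ts j n 0 k = Ψ.fc (j 0) k 0 := rfl

lemma ts_succ (j : ℕ → J) (n : ℕ → ℕ) (r : ℕ) (k : Fin D) :
    Ψ.ts j n (r + 1) k = ∑ l, Ψ.μ l ^ n r * Ψ.fc (j (r + 1)) k l * Ψ.ts j n r l := rfl

lemma trace_MPM (a b : J) (k : Fin D) :
    (Ψ.M b * Ψ.P k * Ψ.M a * Ψ.P 0).trace = Ψ.fc b 0 k * Ψ.fc a k 0 := by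
  rw [trace_mul_P, ← Matrix.mulVec_mulVec, ← Matrix.mulVec_mulVec, P_mulVec,
    Matrix.mulVec_smul, dotProduct_smul]
  show Ψ.fc a k 0 • Ψ.fc b 0 k = _
  rw [smul_eq_mul, mul_comm]

end GenericMPS

/-- Linear independence of geometric sequences with pairwise distinct ratios. -/
lemma mps_vand_zero {m : ℕ} {lam : Fin m → ℂ} (h : Function.Injective lam) {c : Fin m → ℂ}
    (hc : ∀ n : ℕ, ∑ i, lam i ^ n * c i = 0) : ∀ i, c i = 0 := by
  set A : Matrix (Fin m) (Fin m) ℂ := (Matrix.vandermonde lam)ᵀ with hA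
  have hdetA : A.det ≠ 0 := by
    rw [hA, Matrix.det_transpose]
    exact Matrix.det_vandermonde_ne_zero_iff.2 h
  have hv : A.mulVec c = 0 := by
    funext n
    simpa [hA, Matrix.mulVec, dotProduct, Matrix.vandermonde] using hc n
  have hc0 : c = 0 := by
    have h1 : A⁻¹ * A = 1 := Matrix.nonsing_inv_mul A (Ne.isUnit hdetA)
    calc c = (A⁻¹ * A) *ᵥ c := by rw [h1, Matrix.one_mulVec]
      _ = A⁻¹ *ᵥ (A *ᵥ c) := (Matrix.mulVec_mulVec c A⁻¹ A).symm
      _ = 0 := by rw [hv, Matrix.mulVec_zero]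
  intro i; rw [hc0]; rfl

lemma mps_vand_finset {s : Finset ℂ} {c : ℂ → ℂ}
    (h : ∀ n : ℕ, ∑ z ∈ s, z ^ n * c z = 0) : ∀ z ∈ s, c z = 0 := by
  intro z hz
  set e := s.equivFin with he
  set lam : Fin s.card → ℂ := fun i => ((e.symm i : s) : ℂ) with hlam
  have hinj : Function.Injective lam :=
    fun i j hij => e.symm.injective (Subtype.val_injective hij)
  have hsum : ∀ n : ℕ, ∑ i, lam i ^ n * c (lam i) = 0 := by
    intro n
    have h1 : ∑ i, lam i ^ n * c (lam i) = ∑ x : s, (x : ℂ) ^ n * c x :=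
      Equiv.sum_comp e.symm (fun x : s => (x : ℂ) ^ n * c x)
    rw [h1, Finset.sum_coe_sort s (fun z => z ^ n * c z)]
    exact h n
  have := mps_vand_zero hinj hsum (e ⟨z, hz⟩)
  simpa [hlam] using this

lemma mps_fiber_sum {D : ℕ} (s : Finset ℂ) (lam : Fin D → ℂ) (cc : Fin D → ℂ)
    (hmem : ∀ k, lam k ∈ s) (n : ℕ) :
    ∑ z ∈ s, z ^ n * ∑ k ∈ univ.filter (fun k => lam k = z), cc k
      = ∑ k, lam k ^ n * cc k := by
  classical
  have h1 : ∀ z ∈ s, z ^ n * ∑ k ∈ univ.filter (fun k => lam k = z), cc k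
      = ∑ k ∈ univ.filter (fun k => lam k = z), lam k ^ n * cc k := by
    intro z _
    rw [Finset.mul_sum]
    refine Finset.sum_congr rfl fun k hk => ?_
    rw [(Finset.mem_filter.mp hk).2]
  rw [Finset.sum_congr rfl h1]
  exact Finset.sum_fiberwise_of_maps_to (fun k _ => hmem k) _

lemma mps_fiber_eq {D : ℕ} {μ ν : Fin D → ℂ} {c d : Fin D → ℂ}
    (h : ∀ n : ℕ, ∑ k, μ k ^ n * c k = ∑ k, ν k ^ n * d k) (z : ℂ) :
    ∑ k ∈ univ.filter (fun k => μ k = z), c k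
      = ∑ k ∈ univ.filter (fun k => ν k = z), d k := by
  classical
  set s : Finset ℂ := (univ.image μ) ∪ (univ.image ν) with hs
  have hμmem : ∀ k, μ k ∈ s := fun k =>
    Finset.mem_union_left _ (Finset.mem_image_of_mem μ (mem_univ k))
  have hνmem : ∀ k, ν k ∈ s := fun k =>
    Finset.mem_union_right _ (Finset.mem_image_of_mem ν (mem_univ k))
  have hzero : ∀ n : ℕ, ∑ z ∈ s, z ^ n *
      ((∑ k ∈ univ.filter (fun k => μ k = z), c k)
        - (∑ k ∈ univ.filter (fun k => ν k = z), d k)) = 0 := by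
    intro n
    simp only [mul_sub, Finset.sum_sub_distrib]
    rw [mps_fiber_sum s μ c hμmem n, mps_fiber_sum s ν d hνmem n, h n, sub_self]
  have hFz := mps_vand_finset hzero
  by_cases hzs : z ∈ s
  · exact sub_eq_zero.mp (hFz z hzs)
  · rw [Finset.filter_false_of_mem (fun k _ (hk : μ k = z) => hzs (hk ▸ hμmem k)),
      Finset.filter_false_of_mem (fun k _ (hk : ν k = z) => hzs (hk ▸ hνmem k))]
    simp

/-- **Wick's theorem for matrix product states.**  For a generic translation invariant MPS such
that for every eigenvalue `μ k` of `E` there are operators `a, b ∈ J` with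
`Tr(M^b P_{μ_k} M^a P_1) ≠ 0`, agreement of all two-point functions `C^(2)` and all three-point
functions `C^(3)` implies agreement of all `N`-point correlation functions for every `N ≥ 2`:
generically, all higher correlation functions are completely determined by the two- and
three-point functions. -/
theorem mps_wick_two_three_point {D : ℕ} [NeZero D] {J : Type*}
    (Ψ Ψ' : GenericMPS D J)
    (hgen : ∀ k : Fin D, ∃ a b : J, (Ψ.M b * Ψ.P k * Ψ.M a * Ψ.P 0).trace ≠ 0)
    (h2 : ∀ (j : ℕ → J) (n : ℕ → ℕ), Ψ.corr 2 j n = Ψ'.corr 2 j n)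
    (h3 : ∀ (j : ℕ → J) (n : ℕ → ℕ), Ψ.corr 3 j n = Ψ'.corr 3 j n) :
    ∀ N, 2 ≤ N → ∀ (j : ℕ → J) (n : ℕ → ℕ), Ψ.corr N j n = Ψ'.corr N j n := by
  classical
  open GenericMPS in
  have hgen' : ∀ k : Fin D, ∃ a b : J, Ψ.fc b 0 k * Ψ.fc a k 0 ≠ 0 := by
    intro k; obtain ⟨a, b, hab⟩ := hgen k
    exact ⟨a, b, by rwa [Ψ.trace_MPM] at hab⟩
  -- two-point functions in scalar form
  have H2 : ∀ (a b : J) (p : ℕ),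
      ∑ l, Ψ.μ l ^ p * (Ψ.fc b 0 l * Ψ.fc a l 0)
        = ∑ l, Ψ'.μ l ^ p * (Ψ'.fc b 0 l * Ψ'.fc a l 0) := by
    intro a b p
    have h := h2 (fun i => if i = 0 then a else b) (fun _ => p)
    rw [Ψ.corr_eq_ts, Ψ'.corr_eq_ts, show (2:ℕ) - 1 = 0 + 1 from rfl] at h
    simp only [GenericMPS.ts_succ, GenericMPS.ts_zero] at h
    norm_num at h
    calc ∑ l, Ψ.μ l ^ p * (Ψ.fc b 0 l * Ψ.fc a l 0)
        = ∑ l, Ψ.μ l ^ p * Ψ.fc b 0 l * Ψ.fc a l 0 :=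
          Finset.sum_congr rfl fun l _ => by ring
      _ = ∑ l, Ψ'.μ l ^ p * Ψ'.fc b 0 l * Ψ'.fc a l 0 := h
      _ = _ := Finset.sum_congr rfl fun l _ => by ring
  -- three-point functions in scalar form
  have H3 : ∀ (a b e : J) (p q : ℕ),
      ∑ l, Ψ.μ l ^ q * ∑ m, Ψ.μ m ^ p * (Ψ.fc e 0 l * Ψ.fc b l m * Ψ.fc a m 0)
        = ∑ l, Ψ'.μ l ^ q * ∑ m, Ψ'.μ m ^ p * (Ψ'.fc e 0 l * Ψ'.fc b l m * Ψ'.fc a m 0) := by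
    intro a b e p q
    have h := h3 (fun i => if i = 0 then a else if i = 1 then b else e)
      (fun i => if i = 0 then p else q)
    rw [Ψ.corr_eq_ts, Ψ'.corr_eq_ts, show (3:ℕ) - 1 = 0 + 1 + 1 from rfl] at h
    simp only [GenericMPS.ts_succ, GenericMPS.ts_zero] at h
    norm_num at h
    calc ∑ l, Ψ.μ l ^ q * ∑ m, Ψ.μ m ^ p * (Ψ.fc e 0 l * Ψ.fc b l m * Ψ.fc a m 0)
        = ∑ l, Ψ.μ l ^ q * Ψ.fc e 0 l * ∑ m, Ψ.μ m ^ p * Ψ.fc b l m * Ψ.fc a m 0 := by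
          refine Finset.sum_congr rfl fun l _ => ?_
          simp only [Finset.mul_sum]
          exact Finset.sum_congr rfl fun m _ => by ring
      _ = ∑ l, Ψ'.μ l ^ q * Ψ'.fc e 0 l * ∑ m, Ψ'.μ m ^ p * Ψ'.fc b l m * Ψ'.fc a m 0 := h
      _ = _ := by
          refine Finset.sum_congr rfl fun l _ => ?_
          simp only [Finset.mul_sum]
          exact Finset.sum_congr rfl fun m _ => by ring
  -- cancellation of Vandermonde-type sums for the eigenvalues of `Ψ`
  have cancel : ∀ c d : Fin D → ℂ,
      (∀ p : ℕ, ∑ l, Ψ.μ l ^ p * c l = ∑ l, Ψ.μ l ^ p * d l) → ∀ l, c l = d l := by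
    intro c d h l
    have h0 : ∀ p : ℕ, ∑ i, Ψ.μ i ^ p * (c i - d i) = 0 := by
      intro p
      simp only [mul_sub, Finset.sum_sub_distrib, h p, sub_self]
    exact sub_eq_zero.mp (mps_vand_zero Ψ.distinct h0 l)
  -- construction of the eigenvalue-matching bijection σ
  have hex : ∀ k : Fin D, ∃ m : Fin D, Ψ'.μ m = Ψ.μ k := by
    intro k
    obtain ⟨a, b, hab⟩ := hgen' k
    have hfib := mps_fiber_eq (μ := Ψ.μ) (ν := Ψ'.μ)
      (c := fun l => Ψ.fc b 0 l * Ψ.fc a l 0) (d := fun l => Ψ'.fc b 0 l * Ψ'.fc a l 0)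
      (H2 a b) (Ψ.μ k)
    have hL : Finset.univ.filter (fun l => Ψ.μ l = Ψ.μ k) = {k} := by
      ext l; simp [Ψ.distinct.eq_iff]
    rw [hL, Finset.sum_singleton] at hfib
    by_contra hcon
    push_neg at hcon
    rw [Finset.filter_false_of_mem (fun m _ => hcon m), Finset.sum_empty] at hfib
    exact hab hfib
  choose g hg using hex
  have hgbij : Function.Bijective g :=
    Finite.injective_iff_bijective.mp fun k k' hkk' =>
      Ψ.distinct (by rw [← hg k, ← hg k', hkk'])
  have hre : ∀ (f : Fin D → ℂ), ∑ l, f (g l) = ∑ l, f l :=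
    fun f => Fintype.sum_bijective g hgbij _ _ fun l => rfl
  -- agreement of two-point coefficients
  have hT : ∀ (a b : J) (k : Fin D),
      Ψ.fc b 0 k * Ψ.fc a k 0 = Ψ'.fc b 0 (g k) * Ψ'.fc a (g k) 0 := by
    intro a b k
    refine cancel (fun k => Ψ.fc b 0 k * Ψ.fc a k 0)
      (fun k => Ψ'.fc b 0 (g k) * Ψ'.fc a (g k) 0) (fun p => ?_) k
    rw [H2 a b p, ← hre (fun l => Ψ'.μ l ^ p * (Ψ'.fc b 0 l * Ψ'.fc a l 0))]
    exact Finset.sum_congr rfl fun l _ => by rw [hg l]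
  -- agreement of three-point coefficients
  have hS : ∀ (a b e : J) (k l : Fin D),
      Ψ.fc e 0 l * Ψ.fc b l k * Ψ.fc a k 0
        = Ψ'.fc e 0 (g l) * Ψ'.fc b (g l) (g k) * Ψ'.fc a (g k) 0 := by
    intro a b e k l
    have s1 : ∀ (p : ℕ) (l : Fin D),
        ∑ m, Ψ.μ m ^ p * (Ψ.fc e 0 l * Ψ.fc b l m * Ψ.fc a m 0)
          = ∑ m, Ψ.μ m ^ p * (Ψ'.fc e 0 (g l) * Ψ'.fc b (g l) (g m) * Ψ'.fc a (g m) 0) := by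
      intro p
      refine cancel (fun l => ∑ m, Ψ.μ m ^ p * (Ψ.fc e 0 l * Ψ.fc b l m * Ψ.fc a m 0))
        (fun l => ∑ m, Ψ.μ m ^ p * (Ψ'.fc e 0 (g l) * Ψ'.fc b (g l) (g m) * Ψ'.fc a (g m) 0))
        (fun q => ?_)
      rw [H3 a b e p q,
        ← hre (fun l => Ψ'.μ l ^ q * ∑ m, Ψ'.μ m ^ p *
          (Ψ'.fc e 0 l * Ψ'.fc b l m * Ψ'.fc a m 0))]
      refine Finset.sum_congr rfl fun l _ => ?_
      rw [hg l,
        ← hre (fun m => Ψ'.μ m ^ p * (Ψ'.fc e 0 (g l) * Ψ'.fc b (g l) m * Ψ'.fc a m 0))]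
      refine congrArg (fun z => Ψ.μ l ^ q * z) ?_
      refine Finset.sum_congr rfl fun m _ => ?_
      rw [hg m]
    exact cancel (fun m => Ψ.fc e 0 l * Ψ.fc b l m * Ψ.fc a m 0)
      (fun m => Ψ'.fc e 0 (g l) * Ψ'.fc b (g l) (g m) * Ψ'.fc a (g m) 0)
      (fun p => s1 p l) k
  -- the key invariant, by induction on the length of the word
  have key : ∀ (j : ℕ → J) (n : ℕ → ℕ) (r : ℕ), ∀ (e : J) (l : Fin D),
      Ψ.fc e 0 l * Ψ.ts j n r l = Ψ'.fc e 0 (g l) * Ψ'.ts j n r (g l) := by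
    intro j n r
    induction r with
    | zero => intro e l; exact hT (j 0) e l
    | succ r ih =>
      intro e l
      rw [Ψ.ts_succ, Ψ'.ts_succ, Finset.mul_sum, Finset.mul_sum,
        ← hre (fun m => Ψ'.fc e 0 (g l) *
          (Ψ'.μ m ^ n r * Ψ'.fc (j (r + 1)) (g l) m * Ψ'.ts j n r m))]
      refine Finset.sum_congr rfl fun m _ => ?_
      rw [hg m]
      obtain ⟨a, b, hab⟩ := hgen' m
      have h1 := hT a b m
      have h2' := hS a (j (r + 1)) e m l
      have h3' := ih b m
      have hne' : Ψ'.fc b 0 (g m) * Ψ'.fc a (g m) 0 ≠ 0 := by rw [← h1]; exact hab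
      apply mul_right_cancel₀ hne'
      calc Ψ.fc e 0 l * (Ψ.μ m ^ n r * Ψ.fc (j (r + 1)) l m * Ψ.ts j n r m)
            * (Ψ'.fc b 0 (g m) * Ψ'.fc a (g m) 0)
          = Ψ.μ m ^ n r * ((Ψ.fc e 0 l * Ψ.fc (j (r + 1)) l m * Ψ.fc a m 0)
            * (Ψ.fc b 0 m * Ψ.ts j n r m)) := by rw [← h1]; ring
        _ = Ψ.μ m ^ n r * ((Ψ'.fc e 0 (g l) * Ψ'.fc (j (r + 1)) (g l) (g m) * Ψ'.fc a (g m) 0)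
            * (Ψ'.fc b 0 (g m) * Ψ'.ts j n r (g m))) := by rw [h2', h3']
        _ = Ψ'.fc e 0 (g l) * (Ψ.μ m ^ n r * Ψ'.fc (j (r + 1)) (g l) (g m)
            * Ψ'.ts j n r (g m)) * (Ψ'.fc b 0 (g m) * Ψ'.fc a (g m) 0) := by ring
  -- conclusion
  intro N hN j n
  obtain ⟨m, rfl⟩ : ∃ m, N = m + 2 := ⟨N - 2, by omega⟩
  rw [Ψ.corr_eq_ts, Ψ'.corr_eq_ts, show m + 2 - 1 = m + 1 from rfl, Ψ.ts_succ, Ψ'.ts_succ,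
    ← hre (fun l => Ψ'.μ l ^ n m * Ψ'.fc (j (m + 1)) 0 l * Ψ'.ts j n m l)]
  refine Finset.sum_congr rfl fun l _ => ?_
  rw [hg l, mul_assoc, mul_assoc, key j n m (j (m + 1)) l]
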